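/- Let F : [−1,1] → ℝ be continuous with F(1) ≠ 0. Then the integral I(n) = ∫_{−1}^{1} F(u)/(1 − n u) du, defined for n ∈ (0,1), satisfies I(n) / log(1/(1−n)) → F(1) as n → 1⁻. -/

import Mathlib

set_option maxHeartbeats 1000000

open Set Filter intervalIntegral MeasureTheory

private lemma denom_pos' {n u : ℝ} (hn0 : 0 < n) (hn1 : n < 1) (hu : u ∈ Icc (-1:ℝ) 1) :
    0 < 1 - n * u := by
  obtain ⟨h1, h2⟩ := hu; nlinarith

private lemma integral_inv_formula {n : ℝ} (hn0 : 0 < n) {a b : ℝ}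
    (h : ∀ x ∈ uIcc a b, 0 < 1 - n * x) :
    ∫ x in a..b, 1 / (1 - n * x)
      = (1/n) * (Real.log (1 - n * a) - Real.log (1 - n * b)) := by
  have hderiv : ∀ x ∈ uIcc a b,
      HasDerivAt (fun x => -(1/n) * Real.log (1 - n * x)) (1/(1 - n * x)) x := by
    intro x hx
    have h1 : HasDerivAt (fun x : ℝ => 1 - n * x) (-n) x := by
      simpa using (((hasDerivAt_id x).const_mul n).const_sub (1:ℝ))
    have h2 := (Real.hasDerivAt_log (h x hx).ne').comp x h1
    have h3 := h2.const_mul (-(1/n))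
    have hne : (1 - n * x) ≠ 0 := (h x hx).ne'
    refine h3.congr_deriv ?_
    field_simp
  have hint : IntervalIntegrable (fun x => 1/(1 - n * x)) volume a b := by
    apply ContinuousOn.intervalIntegrable
    exact ContinuousOn.div continuousOn_const
      ((continuous_const.sub (continuous_const.mul continuous_id)).continuousOn)
      (fun x hx => (h x hx).ne')
  rw [intervalIntegral.integral_eq_sub_of_hasDerivAt hderiv hint]
  ring

private lemma integrable_aux {g : ℝ → ℝ} (hg : ContinuousOn g (Icc (-1:ℝ) 1))
    {n : ℝ} (hn0 : 0 < n) (hn1 : n < 1) {a b : ℝ} (ha : a ∈ Icc (-1:ℝ) 1)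
    (hb : b ∈ Icc (-1:ℝ) 1) :
    IntervalIntegrable (fun u => g u / (1 - n * u)) volume a b := by
  have hsub : uIcc a b ⊆ Icc (-1:ℝ) 1 := uIcc_subset_Icc ha hb
  apply ContinuousOn.intervalIntegrable
  exact ContinuousOn.div (hg.mono hsub)
    ((continuous_const.sub (continuous_const.mul continuous_id)).continuousOn)
    (fun x hx => (denom_pos' hn0 hn1 (hsub hx)).ne')

private lemma tendsto_neg_log : Tendsto (fun n : ℝ => -Real.log (1 - n))
    (nhdsWithin 1 (Ioo (0:ℝ) 1)) atTop := by
  have h1 : Tendsto (fun n : ℝ => 1 - n) (nhdsWithin 1 (Ioo (0:ℝ) 1))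
      (nhdsWithin 0 (Ioi 0)) := by
    apply tendsto_nhdsWithin_of_tendsto_nhds_of_eventually_within
    · have h : Tendsto (fun n : ℝ => 1 - n) (nhds (1:ℝ)) (nhds (1-1)) :=
        tendsto_const_nhds.sub tendsto_id
      norm_num at h
      exact h.mono_left nhdsWithin_le_nhds
    · filter_upwards [eventually_mem_nhdsWithin] with n hn
      exact sub_pos.mpr hn.2
  have := Real.tendsto_log_nhdsGT_zero.comp h1
  exact tendsto_neg_atBot_atTop.comp this

open Set Filter in
/-- If `F : [−1,1] → ℝ` is continuous with `F 1 ≠ 0`, then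
`I(n) = ∫_{−1}^{1} F(u)/(1 − n u) du` satisfies
`I(n) / log(1/(1−n)) → F 1` as `n → 1⁻` along `n ∈ (0,1)`. -/
theorem stmt6 (F : ℝ → ℝ) (hF : ContinuousOn F (Icc (-1) 1)) (hF1 : F 1 ≠ 0) :
    Tendsto (fun n : ℝ =>
        (∫ u in (-1 : ℝ)..1, F u / (1 - n * u)) / Real.log (1 / (1 - n)))
      (nhdsWithin 1 (Ioo (0 : ℝ) 1)) (nhds (F 1)) := by
  set G : ℝ → ℝ := fun u => F u - F 1 with hGdef
  have hGcont : ContinuousOn G (Icc (-1:ℝ) 1) := hF.sub continuousOn_const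
  have hG1 : G 1 = 0 := by simp [hGdef]
  set t : ℝ → ℝ := fun n => -Real.log (1 - n) with htdef
  have hT : Tendsto t (nhdsWithin 1 (Ioo (0:ℝ) 1)) atTop := tendsto_neg_log
  have hm1 : (-1:ℝ) ∈ Icc (-1:ℝ) 1 := by constructor <;> norm_num
  have hp1 : (1:ℝ) ∈ Icc (-1:ℝ) 1 := by constructor <;> norm_num
  -- decomposition of the quotient
  have hsplit : ∀ n ∈ Ioo (0:ℝ) 1,
      (∫ u in (-1:ℝ)..1, F u / (1 - n * u)) / Real.log (1/(1-n))
      = F 1 * ((1/n) * (Real.log (1+n) + t n)) / t n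
        + (∫ u in (-1:ℝ)..1, G u / (1 - n * u)) / t n := by
    intro n hn
    have hL : Real.log (1/(1-n)) = t n := by
      rw [one_div, Real.log_inv]
    have hpos : ∀ x ∈ uIcc (-1:ℝ) 1, 0 < 1 - n * x := by
      intro x hx
      exact denom_pos' hn.1 hn.2 (uIcc_subset_Icc hm1 hp1 hx)
    have hI1 : IntervalIntegrable (fun u => (fun _ => F 1 : ℝ → ℝ) u / (1 - n * u))
        volume (-1) 1 := integrable_aux continuousOn_const hn.1 hn.2 hm1 hp1
    have hI2 : IntervalIntegrable (fun u => G u / (1 - n * u)) volume (-1) 1 :=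
      integrable_aux hGcont hn.1 hn.2 hm1 hp1
    have heq : (∫ u in (-1:ℝ)..1, F u / (1 - n * u))
        = F 1 * (∫ u in (-1:ℝ)..1, 1 / (1 - n * u))
          + ∫ u in (-1:ℝ)..1, G u / (1 - n * u) := by
      have h1 : (∫ u in (-1:ℝ)..1, F u / (1 - n * u))
          = ∫ u in (-1:ℝ)..1, (F 1 / (1 - n * u) + G u / (1 - n * u)) := by
        apply intervalIntegral.integral_congr
        intro x _
        simp only [hGdef]
        ring
      rw [h1, intervalIntegral.integral_add hI1 hI2]
      congr 1
      rw [← intervalIntegral.integral_const_mul]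
      apply intervalIntegral.integral_congr
      intro x _
      ring
    have hinv : (∫ u in (-1:ℝ)..1, 1 / (1 - n * u))
        = (1/n) * (Real.log (1+n) + t n) := by
      rw [integral_inv_formula hn.1 hpos]
      simp only [htdef]
      ring_nf
    rw [hL, heq, hinv, add_div, mul_div_assoc]
  -- limit of the first term
  have hfirst : Tendsto (fun n : ℝ => F 1 * ((1/n) * (Real.log (1+n) + t n)) / t n)
      (nhdsWithin 1 (Ioo (0:ℝ) 1)) (nhds (F 1)) := by
    have h1n : Tendsto (fun n : ℝ => 1/n) (nhdsWithin 1 (Ioo (0:ℝ) 1)) (nhds 1) := by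
      have : Tendsto (fun n : ℝ => 1/n) (nhds (1:ℝ)) (nhds (1/1)) :=
        (continuousAt_const.div continuousAt_id (by norm_num)).tendsto
      simpa using this.mono_left nhdsWithin_le_nhds
    have hlog2 : Tendsto (fun n : ℝ => Real.log (1+n)) (nhdsWithin 1 (Ioo (0:ℝ) 1))
        (nhds (Real.log 2)) := by
      have : ContinuousAt (fun n : ℝ => Real.log (1+n)) 1 :=
        (Real.continuousAt_log (by norm_num)).comp (continuous_const.add continuous_id).continuousAt
      have h := this.tendsto.mono_left (nhdsWithin_le_nhds :
        nhdsWithin (1:ℝ) (Ioo (0:ℝ) 1) ≤ nhds 1)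
      norm_num at h ⊢
      exact h
    have hratio : Tendsto (fun n : ℝ => Real.log (1+n) / t n)
        (nhdsWithin 1 (Ioo (0:ℝ) 1)) (nhds 0) := hlog2.div_atTop hT
    have htt : Tendsto (fun n : ℝ => t n / t n) (nhdsWithin 1 (Ioo (0:ℝ) 1)) (nhds 1) := by
      have hev : ∀ᶠ n in nhdsWithin 1 (Ioo (0:ℝ) 1), t n / t n = 1 := by
        filter_upwards [hT.eventually_gt_atTop 0] with n hn
        exact div_self hn.ne'
      exact Tendsto.congr' (EventuallyEq.symm hev) tendsto_const_nhds
    have key : Tendsto (fun n : ℝ => F 1 * ((1/n) * (Real.log (1+n) / t n + t n / t n)))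
        (nhdsWithin 1 (Ioo (0:ℝ) 1)) (nhds (F 1 * (1 * (0 + 1)))) :=
      tendsto_const_nhds.mul (h1n.mul (hratio.add htt))
    have : ∀ n : ℝ, F 1 * ((1/n) * (Real.log (1+n) + t n)) / t n
        = F 1 * ((1/n) * (Real.log (1+n) / t n + t n / t n)) := by
      intro n; field_simp
    have key2 := key.congr (fun n => (this n).symm)
    simpa using key2
  -- limit of the second term
  have hsecond : Tendsto (fun n : ℝ => (∫ u in (-1:ℝ)..1, G u / (1 - n * u)) / t n)
      (nhdsWithin 1 (Ioo (0:ℝ) 1)) (nhds 0) := by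
    rw [NormedAddCommGroup.tendsto_nhds_zero]
    intro ε hε
    -- bound of G
    obtain ⟨M, hM⟩ := isCompact_Icc.exists_bound_of_continuousOn hGcont
    have hM0 : 0 ≤ M := le_trans (by simp [hG1]) (hM 1 hp1)
    -- δ from continuity at 1
    have hcw : ContinuousWithinAt G (Icc (-1:ℝ) 1) 1 := hGcont 1 hp1
    rw [Metric.continuousWithinAt_iff] at hcw
    obtain ⟨δ₀, hδ₀, hδprop⟩ := hcw (ε/4) (by linarith)
    set δ : ℝ := min (δ₀/2) 1 with hδdef
    have hδpos : 0 < δ := lt_min (by linarith) one_pos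
    have hδ1 : δ ≤ 1 := min_le_right _ _
    have hGsmall : ∀ u ∈ Icc (-1:ℝ) 1, 1 - δ ≤ u → |G u| ≤ ε/4 := by
      intro u hu hu2
      have hd : dist u 1 < δ₀ := by
        rw [Real.dist_eq, abs_sub_lt_iff]
        have h1 : δ ≤ δ₀/2 := min_le_left _ _
        have h2 := hu.2
        constructor <;> linarith
      have := hδprop hu hd
      rw [hG1, dist_zero_right, Real.norm_eq_abs] at this
      linarith
    have hmid : (1 - δ : ℝ) ∈ Icc (-1:ℝ) 1 := ⟨by linarith, by linarith⟩
    filter_upwards [eventually_mem_nhdsWithin,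
      hT.eventually_gt_atTop (8*M/(δ*ε) + 1),
      (eventually_gt_nhds (show (1:ℝ)/2 < 1 by norm_num)).filter_mono nhdsWithin_le_nhds]
      with n hn htn hn2
    have hn0 : 0 < n := hn.1
    have hn1 : n < 1 := hn.2
    have ht0 : 0 < t n := by
      have h0 : (0:ℝ) ≤ 8*M/(δ*ε) + 1 := by positivity
      exact lt_of_le_of_lt h0 htn
    -- split the integral
    have hIa : IntervalIntegrable (fun u => G u / (1 - n * u)) volume (-1) (1-δ) :=
      integrable_aux hGcont hn0 hn1 hm1 hmid
    have hIb : IntervalIntegrable (fun u => G u / (1 - n * u)) volume (1-δ) 1 :=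
      integrable_aux hGcont hn0 hn1 hmid hp1
    have hsplit2 : (∫ u in (-1:ℝ)..1, G u / (1 - n * u))
        = (∫ u in (-1:ℝ)..(1-δ), G u / (1 - n * u))
          + ∫ u in (1-δ:ℝ)..1, G u / (1 - n * u) :=
      (intervalIntegral.integral_add_adjacent_intervals hIa hIb).symm
    -- bound the first piece
    have hA : ‖∫ u in (-1:ℝ)..(1-δ), G u / (1 - n * u)‖ ≤ 2*M/δ := by
      have hb : ∀ x ∈ Set.uIoc (-1:ℝ) (1-δ), ‖G x / (1 - n * x)‖ ≤ M/δ := by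
        intro x hx
        have hx' : x ∈ Icc (-1:ℝ) (1-δ) := by
          have h1 : (-1:ℝ) ≤ 1 - δ := by linarith
          rw [Set.uIoc_of_le h1] at hx
          exact ⟨le_of_lt hx.1, hx.2⟩
        have hxI : x ∈ Icc (-1:ℝ) 1 := ⟨hx'.1, by linarith [hx'.2]⟩
        have hdp : 0 < 1 - n * x := denom_pos' hn0 hn1 hxI
        have hden : δ ≤ 1 - n * x := by
          rcases le_or_gt 0 x with h | h
          · nlinarith [hx'.2]
          · nlinarith
        rw [norm_div, Real.norm_eq_abs, Real.norm_eq_abs, abs_of_pos hdp]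
        apply div_le_div₀ (by positivity) _ hδpos hden
        simpa using hM x hxI
      have := intervalIntegral.norm_integral_le_of_norm_le_const hb
      have habs : |(1-δ) - (-1:ℝ)| = 2 - δ := by
        rw [abs_of_nonneg] <;> linarith
      rw [habs] at this
      calc ‖∫ u in (-1:ℝ)..(1-δ), G u / (1 - n * u)‖ ≤ M/δ * (2-δ) := this
        _ ≤ 2*M/δ := by
          have h0 : 0 ≤ M/δ := by positivity
          calc M/δ * (2-δ) ≤ M/δ * 2 := by nlinarith
            _ = 2*M/δ := by ring
    -- bound the second piece
    have hn2' : 1/n ≤ 2 := by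
      rw [div_le_iff₀ hn0]; linarith
    have hB : ‖∫ u in (1-δ:ℝ)..1, G u / (1 - n * u)‖ ≤ ε/4 * (2 * t n) := by
      have hg : IntervalIntegrable (fun u => (ε/4) * (1 / (1 - n * u))) volume (1-δ) 1 := by
        simpa only [mul_one_div] using
          integrable_aux (g := fun _ => ε/4) continuousOn_const hn0 hn1 hmid hp1
      have hb : ∀ᵐ x ∂(volume.restrict (Set.uIoc (1-δ:ℝ) 1)),
          ‖G x / (1 - n * x)‖ ≤ (ε/4) * (1 / (1 - n * x)) := by
        apply MeasureTheory.ae_restrict_of_forall_mem measurableSet_uIoc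
        intro x hx
        have h1 : (1-δ:ℝ) ≤ 1 := by linarith
        rw [Set.uIoc_of_le h1] at hx
        have hxI : x ∈ Icc (-1:ℝ) 1 := ⟨by linarith [hx.1], hx.2⟩
        have hdp : 0 < 1 - n * x := denom_pos' hn0 hn1 hxI
        have hGx : |G x| ≤ ε/4 := hGsmall x hxI (le_of_lt hx.1)
        rw [norm_div, Real.norm_eq_abs, Real.norm_eq_abs, abs_of_pos hdp, mul_one_div]
        exact (div_le_div_iff_of_pos_right hdp).mpr hGx
      have hle := intervalIntegral.norm_integral_le_abs_of_norm_le hb hg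
      have hpos2 : ∀ x ∈ uIcc (1-δ:ℝ) 1, 0 < 1 - n * x := fun x hx =>
        denom_pos' hn0 hn1 (uIcc_subset_Icc hmid hp1 hx)
      have hval : (∫ x in (1-δ:ℝ)..1, (ε/4) * (1 / (1 - n * x)))
          = (ε/4) * ((1/n) * (Real.log (1 - n*(1-δ)) - Real.log (1-n))) := by
        rw [intervalIntegral.integral_const_mul, integral_inv_formula hn0 hpos2]
        norm_num
      set S : ℝ := (1/n) * (Real.log (1 - n*(1-δ)) - Real.log (1-n)) with hSdef
      have hlog1 : Real.log (1 - n*(1-δ)) ≤ 0 := by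
        apply Real.log_nonpos
        · nlinarith
        · nlinarith
      have hlog2 : Real.log (1-n) ≤ Real.log (1 - n*(1-δ)) := by
        apply Real.log_le_log (by linarith)
        nlinarith
      have hS0 : 0 ≤ S := by
        apply mul_nonneg (by positivity)
        linarith
      have hS2 : S ≤ 2 * t n := by
        have h1 : Real.log (1 - n*(1-δ)) - Real.log (1-n) ≤ t n := by
          simp only [htdef]; linarith
        have h2 : 0 ≤ Real.log (1 - n*(1-δ)) - Real.log (1-n) := by linarith
        calc S ≤ 2 * (Real.log (1 - n*(1-δ)) - Real.log (1-n)) := by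
                apply mul_le_mul_of_nonneg_right hn2' h2
          _ ≤ 2 * t n := by linarith
      calc ‖∫ u in (1-δ:ℝ)..1, G u / (1 - n * u)‖
          ≤ |(ε/4) * S| := by rw [← hval]; exact hle
        _ = (ε/4) * S := abs_of_nonneg (by positivity)
        _ ≤ ε/4 * (2 * t n) := mul_le_mul_of_nonneg_left hS2 (by linarith)
    -- combine
    have hC : 2*M/δ < ε/2 * t n := by
      have h1 : ε/2 * (8*M/(δ*ε) + 1) < ε/2 * t n :=
        mul_lt_mul_of_pos_left htn (by linarith : (0:ℝ) < ε/2)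
      have h2 : ε/2 * (8*M/(δ*ε) + 1) = 4*M/δ + ε/2 := by
        field_simp
        ring
      have h3 : 2*M/δ ≤ 4*M/δ := by
        gcongr
        linarith
      linarith
    rw [norm_div, Real.norm_eq_abs (t n), abs_of_pos ht0, div_lt_iff₀ ht0]
    calc ‖∫ u in (-1:ℝ)..1, G u / (1 - n * u)‖
        ≤ ‖∫ u in (-1:ℝ)..(1-δ), G u / (1 - n * u)‖
          + ‖∫ u in (1-δ:ℝ)..1, G u / (1 - n * u)‖ := by
          rw [hsplit2]; exact norm_add_le _ _
      _ ≤ 2*M/δ + ε/4 * (2 * t n) := add_le_add hA hB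
      _ < ε * t n := by nlinarith
  have := hfirst.add hsecond
  rw [add_zero] at this
  apply this.congr'
  filter_upwards [eventually_mem_nhdsWithin] with n hn
  exact (hsplit n hn).symm
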